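/- Set g = F₂(1 − q^{-2} K₂² K^{-2}) + α(1 − q^{-2}) F₃ K^{-1} ∈ U. Then for every n ∈ ℕ, l ∈ ℤ and Q ∈ ℂ[K^{±1}, C₁], one has u(n, l, Q) = q^{2nl} K₂^l g^n Q v_η in M(η). -/

import Mathlib

/-!
Formalization of Whittaker modules for the quantum group `U_q(sl₃)`.

Generator indices in the free algebra on `Fin 8`:
`0 = E₁`, `1 = E₂`, `2 = F₁`, `3 = F₂`, `4 = K₁`, `5 = K₁⁻¹`, `6 = K₂`, `7 = K₂⁻¹`.
-/

noncomputable section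
open scoped BigOperators

namespace UqSl3

def X (i : Fin 8) : FreeAlgebra ℂ (Fin 8) := FreeAlgebra.ι ℂ i

/-- The defining relations of `U_q(sl₃)` (Jimbo presentation). -/
inductive rel (q : ℂ) : FreeAlgebra ℂ (Fin 8) → FreeAlgebra ℂ (Fin 8) → Prop
  | K1K1i : rel q (X 4 * X 5) 1
  | K1iK1 : rel q (X 5 * X 4) 1
  | K2K2i : rel q (X 6 * X 7) 1
  | K2iK2 : rel q (X 7 * X 6) 1
  | Kcomm (i j : Fin 8) (hi : 4 ≤ i) (hj : 4 ≤ j) : rel q (X i * X j) (X j * X i)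
  | E1F1 : rel q (X 0 * X 2) (X 2 * X 0 + (q - q⁻¹)⁻¹ • (X 4 - X 5))
  | E2F2 : rel q (X 1 * X 3) (X 3 * X 1 + (q - q⁻¹)⁻¹ • (X 6 - X 7))
  | E1F2 : rel q (X 0 * X 3) (X 3 * X 0)
  | E2F1 : rel q (X 1 * X 2) (X 2 * X 1)
  | K1E1 : rel q (X 4 * X 0) ((q ^ 2 : ℂ) • (X 0 * X 4))
  | K1E2 : rel q (X 4 * X 1) (q⁻¹ • (X 1 * X 4))
  | K2E1 : rel q (X 6 * X 0) (q⁻¹ • (X 0 * X 6))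
  | K2E2 : rel q (X 6 * X 1) ((q ^ 2 : ℂ) • (X 1 * X 6))
  | K1F1 : rel q (X 4 * X 2) (((q ^ 2)⁻¹ : ℂ) • (X 2 * X 4))
  | K1F2 : rel q (X 4 * X 3) (q • (X 3 * X 4))
  | K2F1 : rel q (X 6 * X 2) (q • (X 2 * X 6))
  | K2F2 : rel q (X 6 * X 3) (((q ^ 2)⁻¹ : ℂ) • (X 3 * X 6))
  | serreE1 : rel q (X 0 ^ 2 * X 1 + X 1 * X 0 ^ 2) ((q + q⁻¹) • (X 0 * X 1 * X 0))
  | serreE2 : rel q (X 1 ^ 2 * X 0 + X 0 * X 1 ^ 2) ((q + q⁻¹) • (X 1 * X 0 * X 1))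
  | serreF1 : rel q (X 2 ^ 2 * X 3 + X 3 * X 2 ^ 2) ((q + q⁻¹) • (X 2 * X 3 * X 2))
  | serreF2 : rel q (X 3 ^ 2 * X 2 + X 2 * X 3 ^ 2) ((q + q⁻¹) • (X 3 * X 2 * X 3))

/-- The quantum group `U = U_q(sl₃)`. -/
abbrev Uq (q : ℂ) := RingQuot (rel q)

variable (q α : ℂ)

def mkU : FreeAlgebra ℂ (Fin 8) →ₐ[ℂ] Uq q := RingQuot.mkAlgHom ℂ (rel q)

def E₁ : Uq q := mkU q (X 0)
def E₂ : Uq q := mkU q (X 1)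
def F₁ : Uq q := mkU q (X 2)
def F₂ : Uq q := mkU q (X 3)
def K₁ : Uq q := mkU q (X 4)
def K₁i : Uq q := mkU q (X 5)
def K₂ : Uq q := mkU q (X 6)
def K₂i : Uq q := mkU q (X 7)

lemma rel_eq {a b : FreeAlgebra ℂ (Fin 8)} (h : rel q a b) : mkU q a = mkU q b :=
  RingQuot.mkAlgHom_rel ℂ h

lemma K1_mul_K1i : K₁ q * K₁i q = 1 := by
  simpa [K₁, K₁i, map_mul, map_one] using rel_eq q rel.K1K1i
lemma K1i_mul_K1 : K₁i q * K₁ q = 1 := by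
  simpa [K₁, K₁i, map_mul, map_one] using rel_eq q rel.K1iK1
lemma K2_mul_K2i : K₂ q * K₂i q = 1 := by
  simpa [K₂, K₂i, map_mul, map_one] using rel_eq q rel.K2K2i
lemma K2i_mul_K2 : K₂i q * K₂ q = 1 := by
  simpa [K₂, K₂i, map_mul, map_one] using rel_eq q rel.K2iK2

/-- `K₁` as a unit. -/
def K₁u : (Uq q)ˣ := ⟨K₁ q, K₁i q, K1_mul_K1i q, K1i_mul_K1 q⟩
/-- `K₂` as a unit. -/
def K₂u : (Uq q)ˣ := ⟨K₂ q, K₂i q, K2_mul_K2i q, K2i_mul_K2 q⟩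
/-- `K = K₁K₂²` as a unit. -/
def Ku : (Uq q)ˣ := K₁u q * K₂u q ^ 2

/-- Integer powers `K₂^l`. -/
def K2z (l : ℤ) : Uq q := ((K₂u q ^ l : (Uq q)ˣ) : Uq q)
/-- Integer powers `K^p`, where `K = K₁K₂²`. -/
def Kz (p : ℤ) : Uq q := ((Ku q ^ p : (Uq q)ˣ) : Uq q)

/-- `E₃ = E₁E₂ - q⁻¹E₂E₁`. -/
def E₃ : Uq q := E₁ q * E₂ q - q⁻¹ • (E₂ q * E₁ q)
/-- `F₃ = F₁F₂ - qF₂F₁`. -/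
def F₃ : Uq q := F₁ q * F₂ q - q • (F₂ q * F₁ q)
/-- The Casimir element `C₁ = F₁E₁ + (qK₁ + q⁻¹K₁⁻¹)/(q - q⁻¹)²`. -/
def C₁ : Uq q := F₁ q * E₁ q + ((q - q⁻¹) ^ 2)⁻¹ • (q • K₁ q + q⁻¹ • K₁i q)

/-- The quantum integer `[k] = (q^k - q^{-k})/(q - q⁻¹)`. -/
def qint (k : ℤ) : ℂ := (q ^ k - q ^ (-k)) / (q - q⁻¹)
/-- The quantum factorial `[k]!`. -/
def qfact : ℕ → ℂ
  | 0 => 1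
  | n + 1 => qint q ((n : ℤ) + 1) * qfact n
/-- The quantum binomial coefficient (defined to be `0` when `k > m`). -/
def qbinom (m k : ℕ) : ℂ := if k ≤ m then qfact q m / (qfact q k * qfact q (m - k)) else 0

/-- `[K₂; m] = (q^m K₂ - q^{-m} K₂⁻¹)/(q - q⁻¹)`. -/
def brK2 (m : ℤ) : Uq q := (q - q⁻¹)⁻¹ • ((q ^ m) • K₂ q - (q ^ (-m)) • K₂i q)

/-- The subalgebra `U⁺` generated by `E₁, E₂`. -/
def Uplus : Subalgebra ℂ (Uq q) := Algebra.adjoin ℂ {E₁ q, E₂ q}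
lemma E1_mem_Uplus : E₁ q ∈ Uplus q := Algebra.subset_adjoin (by simp)
lemma E2_mem_Uplus : E₂ q ∈ Uplus q := Algebra.subset_adjoin (by simp)
lemma E3_mem_Uplus : E₃ q ∈ Uplus q :=
  sub_mem (mul_mem (E1_mem_Uplus q) (E2_mem_Uplus q))
    (Subalgebra.smul_mem _ (mul_mem (E2_mem_Uplus q) (E1_mem_Uplus q)) _)

/-- The commutative subalgebra `ℂ[K^{±1}, C₁]` of `U`. -/
def Acal : Subalgebra ℂ (Uq q) := Algebra.adjoin ℂ {Kz q 1, Kz q (-1), C₁ q}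
lemma K_mem_Acal : Kz q 1 ∈ Acal q := Algebra.subset_adjoin (by simp)
lemma Ki_mem_Acal : Kz q (-1) ∈ Acal q := Algebra.subset_adjoin (by simp)
lemma C1_mem_Acal : C₁ q ∈ Acal q := Algebra.subset_adjoin (by simp)

/-- `K` as an element of `ℂ[K^{±1}, C₁]`. -/
def KA : Acal q := ⟨Kz q 1, K_mem_Acal q⟩
/-- `C₁` as an element of `ℂ[K^{±1}, C₁]`. -/
def C1A : Acal q := ⟨C₁ q, C1_mem_Acal q⟩

/-- The critical polynomial `h_n(K, C₁) = q^{3-2n}K + q^{2n-3}K⁻¹ - (q - q⁻¹)²C₁`. -/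
def hn (n : ℕ) : Uq q :=
  q ^ (3 - 2 * (n : ℤ)) • Kz q 1 + q ^ (2 * (n : ℤ) - 3) • Kz q (-1) - ((q - q⁻¹) ^ 2) • C₁ q
lemma hn_mem_Acal (n : ℕ) : hn q n ∈ Acal q :=
  sub_mem (add_mem (Subalgebra.smul_mem _ (K_mem_Acal q) _)
      (Subalgebra.smul_mem _ (Ki_mem_Acal q) _))
    (Subalgebra.smul_mem _ (C1_mem_Acal q) _)
/-- `h_n(K, C₁)` as an element of `ℂ[K^{±1}, C₁]`. -/
def hnA (n : ℕ) : Acal q := ⟨hn q n, hn_mem_Acal q n⟩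

/-- The left ideal `U(E₁ - α) + UE₂`. -/
def lId : Submodule (Uq q) (Uq q) :=
  Submodule.span (Uq q) {E₁ q - algebraMap ℂ (Uq q) α, E₂ q}
/-- The universal Whittaker module `M(η) = U/(U(E₁ - α) + UE₂)`. -/
abbrev Mmod := Uq q ⧸ lId q α
/-- The canonical Whittaker generator `v_η` of `M(η)`. -/
def vη : Mmod q α := Submodule.Quotient.mk 1

/-- The submodule `W(η, I) = U·I·v_η` of `M(η)`. -/
def Wmod (I : Ideal (Acal q)) : Submodule (Uq q) (Mmod q α) :=
  Submodule.span (Uq q) ((fun Q : Acal q => (Q : Uq q) • vη q α) '' (I : Set (Acal q)))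

/-- The maximal ideal `J(κ, c)` of `ℂ[K^{±1}, C₁]` generated by `K - κ` and `C₁ - c`. -/
def Jid (κ c : ℂ) : Ideal (Acal q) :=
  Ideal.span {KA q - algebraMap ℂ (Acal q) κ, C1A q - algebraMap ℂ (Acal q) c}
/-- `W(η; κ, c) = W(η, J(κ, c))`. -/
def WmodJ (κ c : ℂ) : Submodule (Uq q) (Mmod q α) := Wmod q α (Jid q κ c)
/-- `V(η; κ, c) = M(η)/W(η; κ, c)`. -/
abbrev Vmod (κ c : ℂ) := Mmod q α ⧸ WmodJ q α κ c

/-- The coefficients `a_{kj}(n)`. -/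
def akj (n k j : ℕ) : ℂ :=
  (-1) ^ j * α ^ k * (q ^ 2 - 1) ^ k * q ^ ((j : ℤ) * ((n : ℤ) - 3)) *
    q ^ (((k : ℤ) * (2 * (n : ℤ) + 2 * (j : ℤ) + (k : ℤ) - 7)) / 2) *
    qbinom q n k * qbinom q (n - k) j

/-- The element `u(n, l, Q) ∈ M(η)`. -/
def uElt (n : ℕ) (l : ℤ) (Q : Uq q) : Mmod q α :=
  q ^ (2 * (n : ℤ) * l) •
    ((K2z q l *
        (∑ k ∈ Finset.range (n + 1), ∑ j ∈ Finset.range (n - k + 1),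
          akj q α n k j •
            (F₂ q ^ (n - k) * F₃ q ^ k * K2z q (2 * (j : ℤ)) *
              Kz q (-(2 * (j : ℤ) + (k : ℤ))))) * Q) • vη q α)

/-- The value `h_n(κ, c) = q^{3-2n}κ + q^{2n-3}κ⁻¹ - (q - q⁻¹)²c`. -/
def hval (n : ℕ) (κ c : ℂ) : ℂ :=
  q ^ (3 - 2 * (n : ℤ)) * κ + q ^ (2 * (n : ℤ) - 3) * κ⁻¹ - (q - q⁻¹) ^ 2 * c
/-- A pair `(κ, c)` is critical if `h_n(κ, c) = 0` for some positive integer `n`. -/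
def Critical (κ c : ℂ) : Prop := ∃ n : ℕ, 0 < n ∧ hval q n κ c = 0

/-- The set `Î_n = {Q : h_n(K, C₁)Q ∈ I}`. -/
def hatI (I : Ideal (Acal q)) (n : ℕ) : Set (Acal q) := {Q | hnA q n * Q ∈ I}
/-- An ideal `I` is non-critical if `Î_n = I` for all positive `n`. -/
def NonCriticalIdeal (I : Ideal (Acal q)) : Prop :=
  ∀ n : ℕ, 0 < n → hatI q I n = (I : Set (Acal q))

end UqSl3

-- ======================= auxiliary development =======================
namespace UqSl3

section GenericHelpers
variable {A : Type*} [Ring A] [Algebra ℂ A]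

lemma comm_shift {x y : A} {c : ℂ} (h : y * x = c • (x * y)) (z : A) :
    y * (x * z) = c • (x * (y * z)) := by
  rw [← mul_assoc, h, smul_mul_assoc, mul_assoc]

lemma swap_right {x y : A} {c : ℂ} (h : y * x = c • (x * y)) (w : A) :
    (w * y) * x = c • ((w * x) * y) := by
  rw [mul_assoc, h, mul_smul_comm, ← mul_assoc]

lemma comm_comp {x u v : A} {c d : ℂ}
    (hu : u * x = c • (x * u)) (hv : v * x = d • (x * v)) :
    (u * v) * x = (c * d) • (x * (u * v)) := by
  rw [mul_assoc, hv, mul_smul_comm, ← mul_assoc, hu, smul_mul_assoc, smul_smul, mul_assoc,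
    mul_comm d c]

lemma pow_comm_left {x y : A} {c : ℂ} (h : y * x = c • (x * y)) (b : ℕ) :
    y ^ b * x = c ^ b • (x * y ^ b) := by
  induction b with
  | zero => simp
  | succ n ih =>
      rw [pow_succ, mul_assoc, h, mul_smul_comm, ← mul_assoc, ih, smul_mul_assoc, smul_smul,
        mul_assoc, ← pow_succ, ← pow_succ']

lemma unit_inv_comm (u : Aˣ) (x : A) (c : ℂˣ)
    (h : (u : A) * x = (c : ℂ) • (x * u)) :
    ((u⁻¹ : Aˣ) : A) * x = ((c⁻¹ : ℂˣ) : ℂ) • (x * ((u⁻¹ : Aˣ) : A)) := by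
  have h3 : x * ((u⁻¹ : Aˣ) : A) = (c : ℂ) • (((u⁻¹ : Aˣ) : A) * x) := by
    conv_lhs => rw [show x = ((u⁻¹ : Aˣ) : A) * ((u : A) * x) from (u.inv_mul_cancel_left x).symm]
    rw [h, mul_smul_comm, smul_mul_assoc, ← mul_assoc, mul_assoc (((u⁻¹:Aˣ):A) * x),
      u.mul_inv, mul_one]
  rw [h3, smul_smul, ← Units.val_mul, inv_mul_cancel, Units.val_one, one_smul]

lemma unit_zpow_comm (u : Aˣ) (x : A) (c : ℂˣ)
    (h : (u : A) * x = (c : ℂ) • (x * u)) (m : ℤ) :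
    ((u ^ m : Aˣ) : A) * x = ((c ^ m : ℂˣ) : ℂ) • (x * ((u ^ m : Aˣ) : A)) := by
  induction m using Int.induction_on with
  | zero => simp
  | succ n ih =>
      rw [show ((n : ℤ) + 1) = (n : ℤ) + 1 from rfl, zpow_add_one, zpow_add_one,
        Units.val_mul, Units.val_mul, mul_assoc, h, mul_smul_comm, ← mul_assoc, ih,
        smul_mul_assoc, smul_smul, mul_assoc, mul_comm ((c:ℂ))]
  | pred n ih =>
      rw [show (-(n : ℤ) - 1) = -(n : ℤ) + (-1) from by ring, zpow_add, zpow_add,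
        zpow_neg_one, zpow_neg_one, Units.val_mul, Units.val_mul, mul_assoc,
        unit_inv_comm u x c h, mul_smul_comm, ← mul_assoc, ih, smul_mul_assoc, smul_smul,
        mul_assoc, mul_comm (((c⁻¹ : ℂˣ) : ℂ))]

end GenericHelpers

section BaseRels
variable {q : ℂ}

lemma zpow_neg_two (hq0 : q ≠ 0) : q ^ (-2 : ℤ) = ((q ^ 2 : ℂ))⁻¹ := by
  rw [zpow_neg, show ((2:ℤ)) = ((2:ℕ):ℤ) from rfl, zpow_natCast]

lemma K2_mul_F2 (hq0 : q ≠ 0) : K₂ q * F₂ q = q ^ (-2:ℤ) • (F₂ q * K₂ q) := by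
  have h := rel_eq q (rel.K2F2 (q := q))
  rw [map_mul, map_smul, map_mul] at h
  rw [zpow_neg_two hq0]
  exact h

lemma K2_mul_F1 : K₂ q * F₁ q = q ^ (1:ℤ) • (F₁ q * K₂ q) := by
  have h := rel_eq q (rel.K2F1 (q := q))
  rw [map_mul, map_smul, map_mul] at h
  rw [zpow_one]
  exact h

lemma K1_mul_F1 (hq0 : q ≠ 0) : K₁ q * F₁ q = q ^ (-2:ℤ) • (F₁ q * K₁ q) := by
  have h := rel_eq q (rel.K1F1 (q := q))
  rw [map_mul, map_smul, map_mul] at h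
  rw [zpow_neg_two hq0]
  exact h

lemma K1_mul_F2 : K₁ q * F₂ q = q ^ (1:ℤ) • (F₂ q * K₁ q) := by
  have h := rel_eq q (rel.K1F2 (q := q))
  rw [map_mul, map_smul, map_mul] at h
  rw [zpow_one]
  exact h

lemma serreF (q : ℂ) : F₂ q ^ 2 * F₁ q + F₁ q * F₂ q ^ 2 = (q + q⁻¹) • (F₂ q * F₁ q * F₂ q) := by
  have h := rel_eq q (rel.serreF2 (q := q))
  rw [map_add, map_mul, map_mul, map_smul, map_mul, map_mul, map_pow] at h
  exact h

lemma F3_def' (q : ℂ) : F₃ q = F₁ q * F₂ q - q ^ (1:ℤ) • (F₂ q * F₁ q) := by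
  rw [zpow_one]; rfl

lemma K2_mul_F3 (hq0 : q ≠ 0) : K₂ q * F₃ q = q ^ (-1:ℤ) • (F₃ q * K₂ q) := by
  rw [F3_def', mul_sub, sub_mul, comm_shift K2_mul_F1, K2_mul_F2 hq0, mul_smul_comm,
    smul_smul, ← zpow_add₀ hq0, mul_smul_comm, comm_shift (K2_mul_F2 hq0), K2_mul_F1,
    mul_smul_comm, smul_smul, smul_smul, ← zpow_add₀ hq0, ← zpow_add₀ hq0]
  norm_num [mul_assoc]
  rw [smul_sub, smul_smul, inv_mul_cancel₀ hq0, one_smul]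

lemma K1_mul_F3 (hq0 : q ≠ 0) : K₁ q * F₃ q = q ^ (-1:ℤ) • (F₃ q * K₁ q) := by
  rw [F3_def', mul_sub, sub_mul, comm_shift (K1_mul_F1 hq0), K1_mul_F2, mul_smul_comm,
    smul_smul, ← zpow_add₀ hq0, mul_smul_comm, comm_shift K1_mul_F2, K1_mul_F1 hq0,
    mul_smul_comm, smul_smul, smul_smul, ← zpow_add₀ hq0, ← zpow_add₀ hq0]
  norm_num [mul_assoc]
  rw [smul_sub, smul_smul, inv_mul_cancel₀ hq0, one_smul]

lemma F3_mul_F2 (hq0 : q ≠ 0) : F₃ q * F₂ q = q ^ (-1:ℤ) • (F₂ q * F₃ q) := by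
  have h := serreF q
  rw [pow_two, mul_assoc (F₂ q) (F₂ q) (F₁ q), mul_assoc (F₂ q) (F₁ q) (F₂ q)] at h
  have hs : F₁ q * (F₂ q * F₂ q)
      = (q + q⁻¹) • (F₂ q * (F₁ q * F₂ q)) - F₂ q * (F₂ q * F₁ q) := by
    rw [eq_sub_iff_add_eq, add_comm]; exact h
  rw [F3_def', sub_mul, mul_sub, smul_mul_assoc, mul_smul_comm,
    mul_assoc (F₁ q) (F₂ q) (F₂ q), mul_assoc (F₂ q) (F₁ q) (F₂ q), hs,
    zpow_one, show q^(-1:ℤ) = q⁻¹ from zpow_neg_one q, smul_sub, smul_smul,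
    inv_mul_cancel₀ hq0, one_smul]
  module

end BaseRels

section UnitsLayer
variable {q : ℂ}

lemma Ku_val : ((Ku q : (Uq q)ˣ) : Uq q) = K₁ q * (K₂ q * K₂ q) := by
  show ((K₁u q * K₂u q ^ 2 : (Uq q)ˣ) : Uq q) = _
  rw [Units.val_mul, pow_two, Units.val_mul]
  rfl

lemma Ku_mul_F2 (hq0 : q ≠ 0) :
    ((Ku q : (Uq q)ˣ) : Uq q) * F₂ q = q ^ (-3:ℤ) • (F₂ q * ((Ku q : (Uq q)ˣ) : Uq q)) := by
  rw [Ku_val]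
  have h23 : (K₂ q * K₂ q) * F₂ q = (q^(-2:ℤ) * q^(-2:ℤ)) • (F₂ q * (K₂ q * K₂ q)) :=
    comm_comp (K2_mul_F2 hq0) (K2_mul_F2 hq0)
  rw [comm_comp K1_mul_F2 h23]
  congr 1
  rw [← zpow_add₀ hq0, ← zpow_add₀ hq0]
  norm_num

lemma Ku_mul_F3 (hq0 : q ≠ 0) :
    ((Ku q : (Uq q)ˣ) : Uq q) * F₃ q = q ^ (-3:ℤ) • (F₃ q * ((Ku q : (Uq q)ˣ) : Uq q)) := by
  rw [Ku_val]
  have h23 : (K₂ q * K₂ q) * F₃ q = (q^(-1:ℤ) * q^(-1:ℤ)) • (F₃ q * (K₂ q * K₂ q)) :=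
    comm_comp (K2_mul_F3 hq0) (K2_mul_F3 hq0)
  rw [comm_comp (K1_mul_F3 hq0) h23]
  congr 1
  rw [← zpow_add₀ hq0, ← zpow_add₀ hq0]
  norm_num

lemma zpow_npow (a : ℤ) (b : ℕ) : (q^(a:ℤ))^(b:ℕ) = q^(a*(b:ℤ)) := by
  rw [← zpow_natCast (q^a) b, ← zpow_mul]

lemma K2z_mul_F2 (hq0 : q ≠ 0) (m : ℤ) :
    K2z q m * F₂ q = q ^ (-2*m) • (F₂ q * K2z q m) := by
  have h := unit_zpow_comm (K₂u q) (F₂ q) (Units.mk0 (q^(-2:ℤ)) (zpow_ne_zero _ hq0))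
    (K2_mul_F2 hq0) m
  rw [show ((Units.mk0 (q^(-2:ℤ)) (zpow_ne_zero _ hq0) ^ m : ℂˣ) : ℂ) = q^(-2*m) by
    rw [Units.val_zpow_eq_zpow_val, Units.val_mk0, ← zpow_mul]] at h
  exact h

lemma K2z_mul_F3 (hq0 : q ≠ 0) (m : ℤ) :
    K2z q m * F₃ q = q ^ (-m) • (F₃ q * K2z q m) := by
  have h := unit_zpow_comm (K₂u q) (F₃ q) (Units.mk0 (q^(-1:ℤ)) (zpow_ne_zero _ hq0))
    (K2_mul_F3 hq0) m
  rw [show ((Units.mk0 (q^(-1:ℤ)) (zpow_ne_zero _ hq0) ^ m : ℂˣ) : ℂ) = q^(-m) by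
    rw [Units.val_zpow_eq_zpow_val, Units.val_mk0, ← zpow_mul]; norm_num] at h
  exact h

lemma Kz_mul_F2 (hq0 : q ≠ 0) (m : ℤ) :
    Kz q m * F₂ q = q ^ (-3*m) • (F₂ q * Kz q m) := by
  have h := unit_zpow_comm (Ku q) (F₂ q) (Units.mk0 (q^(-3:ℤ)) (zpow_ne_zero _ hq0))
    (Ku_mul_F2 hq0) m
  rw [show ((Units.mk0 (q^(-3:ℤ)) (zpow_ne_zero _ hq0) ^ m : ℂˣ) : ℂ) = q^(-3*m) by
    rw [Units.val_zpow_eq_zpow_val, Units.val_mk0, ← zpow_mul]] at h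
  exact h

lemma Kz_mul_F3 (hq0 : q ≠ 0) (m : ℤ) :
    Kz q m * F₃ q = q ^ (-3*m) • (F₃ q * Kz q m) := by
  have h := unit_zpow_comm (Ku q) (F₃ q) (Units.mk0 (q^(-3:ℤ)) (zpow_ne_zero _ hq0))
    (Ku_mul_F3 hq0) m
  rw [show ((Units.mk0 (q^(-3:ℤ)) (zpow_ne_zero _ hq0) ^ m : ℂˣ) : ℂ) = q^(-3*m) by
    rw [Units.val_zpow_eq_zpow_val, Units.val_mk0, ← zpow_mul]] at h
  exact h

lemma K2z_add (a b : ℤ) : K2z q a * K2z q b = K2z q (a+b) := by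
  show ((K₂u q ^ a : (Uq q)ˣ) : Uq q) * ((K₂u q ^ b : (Uq q)ˣ) : Uq q) = _
  rw [← Units.val_mul, ← zpow_add]
  rfl

lemma Kz_add (a b : ℤ) : Kz q a * Kz q b = Kz q (a+b) := by
  show ((Ku q ^ a : (Uq q)ˣ) : Uq q) * ((Ku q ^ b : (Uq q)ˣ) : Uq q) = _
  rw [← Units.val_mul, ← zpow_add]
  rfl

lemma K2z_zero : K2z q 0 = 1 := by
  show ((K₂u q ^ (0:ℤ) : (Uq q)ˣ) : Uq q) = 1
  rw [zpow_zero, Units.val_one]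

lemma Kz_zero : Kz q 0 = 1 := by
  show ((Ku q ^ (0:ℤ) : (Uq q)ˣ) : Uq q) = 1
  rw [zpow_zero, Units.val_one]

lemma K2_K1_comm : K₂ q * K₁ q = K₁ q * K₂ q := by
  have h := rel_eq q (rel.Kcomm (q := q) 6 4 (by decide) (by decide))
  rw [map_mul, map_mul] at h
  exact h

lemma Kz_K2z_comm (a b : ℤ) : Kz q a * K2z q b = K2z q b * Kz q a := by
  have hc : Commute (K₂u q) (K₁u q) := Units.ext K2_K1_comm
  have hKu : Commute (Ku q) (K₂u q) :=
    Commute.mul_left hc.symm ((Commute.refl (K₂u q)).pow_left 2)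
  have := hKu.zpow_zpow a b
  calc Kz q a * K2z q b = ((Ku q ^ a * K₂u q ^ b : (Uq q)ˣ) : Uq q) := (Units.val_mul _ _).symm
  _ = ((K₂u q ^ b * Ku q ^ a : (Uq q)ˣ) : Uq q) := by rw [this]
  _ = K2z q b * Kz q a := Units.val_mul _ _

end UnitsLayer

section MonLayer
variable {q : ℂ}

/-- Normal-ordered monomial `F₂^a F₃^b K₂^x K^y`. -/
def Mon (q : ℂ) (a b : ℕ) (x y : ℤ) : Uq q := F₂ q ^ a * F₃ q ^ b * K2z q x * Kz q y

lemma Mon_mul_F2 (hq0 : q ≠ 0) (a b : ℕ) (x y : ℤ) :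
    Mon q a b x y * F₂ q = q ^ (-2*x - 3*y - (b:ℤ)) • Mon q (a+1) b x y := by
  unfold Mon
  rw [swap_right (Kz_mul_F2 hq0 y), swap_right (K2z_mul_F2 hq0 x),
    swap_right (pow_comm_left (F3_mul_F2 hq0) b), ← pow_succ]
  simp only [smul_mul_assoc, smul_smul]
  rw [zpow_npow, ← zpow_add₀ hq0, ← zpow_add₀ hq0]
  congr 1
  ring

lemma Mon_mul_F3 (hq0 : q ≠ 0) (a b : ℕ) (x y : ℤ) :
    Mon q a b x y * F₃ q = q ^ (-x - 3*y) • Mon q a (b+1) x y := by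
  unfold Mon
  rw [swap_right (Kz_mul_F3 hq0 y), swap_right (K2z_mul_F3 hq0 x),
    mul_assoc (F₂ q ^ a), ← pow_succ]
  simp only [smul_mul_assoc, smul_smul]
  rw [← zpow_add₀ hq0]
  congr 1
  ring

lemma Mon_mul_Kz (a b : ℕ) (x y y' : ℤ) :
    Mon q a b x y * Kz q y' = Mon q a b x (y+y') := by
  unfold Mon
  rw [mul_assoc, Kz_add]

lemma Mon_mul_K2zKz (a b : ℕ) (x y x' y' : ℤ) :
    Mon q a b x y * (K2z q x' * Kz q y') = Mon q a b (x+x') (y+y') := by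
  unfold Mon
  rw [← mul_assoc, mul_assoc (F₂ q ^ a * F₃ q ^ b * K2z q x), Kz_K2z_comm,
    ← mul_assoc (F₂ q ^ a * F₃ q ^ b * K2z q x), mul_assoc (F₂ q ^ a * F₃ q ^ b), K2z_add,
    mul_assoc, Kz_add]

lemma Mon_one : Mon q 0 0 0 0 = 1 := by
  unfold Mon
  rw [pow_zero, pow_zero, K2z_zero, Kz_zero]
  simp

end MonLayer

end UqSl3


open UqSl3 in
/-- The element `g = F₂(1 - q⁻²K₂²K⁻²) + α(1 - q⁻²)F₃K⁻¹`. -/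
def gElt (q α : ℂ) : Uq q :=
  F₂ q * (1 - q ^ (-2 : ℤ) • (K2z q 2 * Kz q (-2))) +
    (α * (1 - q ^ (-2 : ℤ))) • (F₃ q * Kz q (-1))

namespace UqSl3

section GLayer
variable {q : ℂ}

lemma g_decomp (α : ℂ) :
    gElt q α = F₂ q - q^(-2:ℤ) • (F₂ q * (K2z q 2 * Kz q (-2)))
      + (α*(1-q^(-2:ℤ))) • (F₃ q * Kz q (-1)) := by
  unfold gElt
  rw [mul_sub, mul_one, mul_smul_comm]

lemma Mon_mul_g (hq0 : q ≠ 0) (α : ℂ) (a b : ℕ) (x y : ℤ) :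
    Mon q a b x y * gElt q α
      = q^(-2*x-3*y-(b:ℤ)) • Mon q (a+1) b x y
        - q^(-2*x-3*y-(b:ℤ)-2) • Mon q (a+1) b (x+2) (y-2)
        + (α*(1-q^(-2:ℤ)) * q^(-x-3*y)) • Mon q a (b+1) x (y-1) := by
  rw [g_decomp, mul_add, mul_sub, mul_smul_comm, mul_smul_comm,
    ← mul_assoc (Mon q a b x y) (F₂ q), ← mul_assoc (Mon q a b x y) (F₃ q),
    Mon_mul_F2 hq0, Mon_mul_F3 hq0, smul_mul_assoc, smul_mul_assoc, Mon_mul_K2zKz,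
    Mon_mul_Kz, smul_smul, smul_smul, ← zpow_add₀ hq0,
    show (-2:ℤ) + (-2*x-3*y-(b:ℤ)) = -2*x-3*y-(b:ℤ)-2 by ring,
    show y + (-2:ℤ) = y - 2 by ring, show y + (-1:ℤ) = y - 1 by ring]

lemma Mon_mul_g' (hq0 : q ≠ 0) (α : ℂ) (n k j : ℕ) :
    Mon q (n-k) k (2*(j:ℤ)) (-(2*(j:ℤ)+(k:ℤ))) * gElt q α
      = q^(2*(j:ℤ)+2*(k:ℤ)) • Mon q (n-k+1) k (2*(j:ℤ)) (-(2*(j:ℤ)+(k:ℤ)))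
        - q^(2*(j:ℤ)+2*(k:ℤ)-2) • Mon q (n-k+1) k (2*((j+1:ℕ):ℤ)) (-(2*((j+1:ℕ):ℤ)+(k:ℤ)))
        + (α*(1-q^(-2:ℤ)) * q^(4*(j:ℤ)+3*(k:ℤ))) •
            Mon q (n-k) (k+1) (2*(j:ℤ)) (-(2*(j:ℤ)+((k+1:ℕ):ℤ))) := by
  rw [Mon_mul_g hq0 α,
    show -2*(2*(j:ℤ))-3*(-(2*(j:ℤ)+(k:ℤ)))-((k:ℕ):ℤ) = 2*(j:ℤ)+2*(k:ℤ) by ring,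
    show 2*(j:ℤ)+2*(k:ℤ)-2 = 2*(j:ℤ)+2*(k:ℤ)-2 from rfl,
    show 2*(j:ℤ)+2 = 2*((j+1:ℕ):ℤ) by push_cast; ring,
    show -(2*(j:ℤ)+(k:ℤ))-2 = -(2*((j+1:ℕ):ℤ)+(k:ℤ)) by push_cast; ring,
    show -(2*(j:ℤ))-3*(-(2*(j:ℤ)+(k:ℤ))) = 4*(j:ℤ)+3*(k:ℤ) by ring,
    show -(2*(j:ℤ)+(k:ℤ))-1 = -(2*(j:ℤ)+((k+1:ℕ):ℤ)) by push_cast; ring]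

end GLayer

end UqSl3

namespace UqSl3
section ScalarLayer



variable {q : ℂ}

lemma sub_inv_ne_zero (hq0 : q ≠ 0) (hq : ∀ n : ℕ, n ≠ 0 → q ^ n ≠ 1) : q - q⁻¹ ≠ 0 := by
  intro h
  have hi : q = q⁻¹ := sub_eq_zero.mp h
  exact hq 2 (by norm_num) (by rw [pow_two]; nth_rewrite 2 [hi]; exact mul_inv_cancel₀ hq0)

lemma qint_nat_ne_zero (hq0 : q ≠ 0) (hq : ∀ n : ℕ, n ≠ 0 → q ^ n ≠ 1) (m : ℕ) (hm : m ≠ 0) :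
    qint q (m : ℤ) ≠ 0 := by
  apply div_ne_zero _ (sub_inv_ne_zero hq0 hq)
  intro h
  have this1 : q ^ (m:ℤ) = q ^ (-(m:ℤ)) := sub_eq_zero.mp h
  have he : q ^ ((m : ℤ) + m) = 1 := by
    calc q ^ ((m:ℤ) + m) = q ^ (m:ℤ) * q ^ (m:ℤ) := zpow_add₀ hq0 _ _
    _ = q ^ (-(m:ℤ)) * q ^ (m:ℤ) := by rw [this1]
    _ = 1 := by rw [← zpow_add₀ hq0]; simp
  have h2 : q ^ ((2*m : ℕ) : ℤ) = 1 := by rw [show ((2*m:ℕ):ℤ) = (m:ℤ) + m by push_cast; ring]; exact he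
  rw [zpow_natCast] at h2
  exact hq (2*m) (by omega) h2

lemma qfact_ne_zero (hq0 : q ≠ 0) (hq : ∀ n : ℕ, n ≠ 0 → q ^ n ≠ 1) : ∀ m : ℕ, qfact q m ≠ 0
  | 0 => one_ne_zero
  | n + 1 => by
      have h1 : qint q ((n:ℤ)+1) ≠ 0 := by
        have := qint_nat_ne_zero hq0 hq (n+1) (by omega)
        rwa [show (((n+1:ℕ)):ℤ) = (n:ℤ)+1 by push_cast; ring] at this
      exact mul_ne_zero h1 (qfact_ne_zero hq0 hq n)

lemma qfact_succ (n : ℕ) : qfact q (n+1) = qint q ((n:ℤ)+1) * qfact q n := rfl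

lemma qbinom_of_le {m k : ℕ} (h : k ≤ m) :
    qbinom q m k = qfact q m / (qfact q k * qfact q (m - k)) := if_pos h

lemma qbinom_of_lt {m k : ℕ} (h : m < k) : qbinom q m k = 0 := if_neg (by omega)

lemma qbinom_zero (hq0 : q ≠ 0) (hq : ∀ n : ℕ, n ≠ 0 → q ^ n ≠ 1) (m : ℕ) : qbinom q m 0 = 1 := by
  rw [qbinom_of_le (Nat.zero_le m)]
  simp [qfact, div_self (qfact_ne_zero hq0 hq m)]

section Part2
variable {q : ℂ}

lemma trinom (hq0 : q ≠ 0) (hq : ∀ n : ℕ, n ≠ 0 → q ^ n ≠ 1) {m k j : ℕ} (h : k + j ≤ m) :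
    qbinom q m k * qbinom q (m-k) j
      = qfact q m / (qfact q k * qfact q j * qfact q (m-k-j)) := by
  rw [qbinom_of_le (by omega : k ≤ m), qbinom_of_le (by omega : j ≤ m - k)]
  have h1 := qfact_ne_zero hq0 hq k
  have h2 := qfact_ne_zero hq0 hq j
  have h3 := qfact_ne_zero hq0 hq (m-k)
  have h4 := qfact_ne_zero hq0 hq (m-k-j)
  field_simp

lemma trinom' (hq0 : q ≠ 0) (hq : ∀ n : ℕ, n ≠ 0 → q ^ n ≠ 1) {n k j : ℕ} (h : k + j ≤ n + 1)
    (hk : k ≤ n) :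
    qbinom q n k * qbinom q (n-k) j
      = qint q ((n+1-k-j : ℕ) : ℤ) * qfact q n / (qfact q k * qfact q j * qfact q (n+1-k-j)) := by
  rcases le_or_gt (k + j) n with h' | h'
  · rw [trinom hq0 hq h']
    have e1 : n + 1 - k - j = (n - k - j) + 1 := by omega
    rw [e1, qfact_succ, show ((n-k-j+1 : ℕ):ℤ) = ((n-k-j:ℕ):ℤ)+1 by push_cast; ring]
    have h1 := qfact_ne_zero hq0 hq k
    have h2 := qfact_ne_zero hq0 hq j
    have h4 := qfact_ne_zero hq0 hq (n-k-j)
    have h5 : qint q (((n-k-j:ℕ):ℤ)+1) ≠ 0 := by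
      have := qint_nat_ne_zero hq0 hq (n-k-j+1) (by omega)
      rwa [show ((n-k-j+1:ℕ):ℤ) = ((n-k-j:ℕ):ℤ)+1 by push_cast; ring] at this
    field_simp
  · -- k + j = n + 1 : LHS is 0, and qint 0 = 0
    have hj : n - k < j := by omega
    have e0 : n + 1 - k - j = 0 := by omega
    rw [qbinom_of_lt hj, e0]
    simp [qint]

lemma qint_id (hq0 : q ≠ 0) (hden : q - q⁻¹ ≠ 0) (x y z : ℤ) :
    qint q (x+y+z) = q^(y+z) * qint q x + q^(-(x+z)) * qint q y + q^(y-x) * qint q z := by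
  have hx : q ^ x ≠ 0 := zpow_ne_zero _ hq0
  have hy : q ^ y ≠ 0 := zpow_ne_zero _ hq0
  have hz : q ^ z ≠ 0 := zpow_ne_zero _ hq0
  have key : q^(x+y+z) - q^(-(x+y+z))
      = q^(y+z)*(q^x - q^(-x)) + q^(-(x+z))*(q^y - q^(-y)) + q^(y-x)*(q^z - q^(-z)) := by
    have e1 : q^(x+y+z) = q^x*q^y*q^z := by rw [zpow_add₀ hq0, zpow_add₀ hq0]
    have e2 : q^(-(x+y+z)) = q^(-x)*q^(-y)*q^(-z) := by
      rw [show -(x+y+z) = -x + -y + -z by ring, zpow_add₀ hq0, zpow_add₀ hq0]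
    have e3 : q^(y+z) = q^y*q^z := zpow_add₀ hq0 _ _
    have e4 : q^(-(x+z)) = q^(-x)*q^(-z) := by
      rw [show -(x+z) = -x + -z by ring, zpow_add₀ hq0]
    have e5 : q^(y-x) = q^y*q^(-x) := by rw [show y-x = y + -x by ring, zpow_add₀ hq0]
    rw [e1, e2, e3, e4, e5]
    ring
  simp only [qint, ← mul_div_assoc]
  rw [← add_div, ← add_div, key]

lemma qint_split (hq0 : q ≠ 0) (hq : ∀ n : ℕ, n ≠ 0 → q ^ n ≠ 1) {n k j : ℕ} (h : k + j ≤ n + 1) :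
    qint q ((n:ℤ)+1)
      = q^((j:ℤ)+(k:ℤ)) * qint q ((n+1-k-j : ℕ):ℤ)
        + q^((j:ℤ)-((n:ℤ)+1)) * qint q (j:ℤ)
        + q^(2*(j:ℤ)+(k:ℤ)-((n:ℤ)+1)) * qint q (k:ℤ) := by
  have hx : ((n+1-k-j:ℕ):ℤ) = (n:ℤ)+1-(k:ℤ)-(j:ℤ) := by omega
  have := qint_id hq0 (sub_inv_ne_zero hq0 hq) ((n+1-k-j:ℕ):ℤ) (j:ℤ) (k:ℤ)
  rw [show ((n+1-k-j:ℕ):ℤ) + (j:ℤ) + (k:ℤ) = (n:ℤ)+1 by omega,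
    show -(((n+1-k-j:ℕ):ℤ) + (k:ℤ)) = (j:ℤ)-((n:ℤ)+1) by omega,
    show (j:ℤ) - ((n+1-k-j:ℕ):ℤ) = 2*(j:ℤ)+(k:ℤ)-((n:ℤ)+1) by omega] at this
  rw [this]

lemma qint_zero : qint q 0 = 0 := by simp [qint]

lemma qbinom_self (hq0 : q ≠ 0) (hq : ∀ n : ℕ, n ≠ 0 → q ^ n ≠ 1) (m : ℕ) : qbinom q m m = 1 := by
  rw [qbinom_of_le le_rfl, Nat.sub_self]
  simp [qfact, div_self (qfact_ne_zero hq0 hq m)]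


lemma mul_mul_assoc {c A D R : ℂ} (h : A * D = R) : c * A * D = c * R := by
  rw [mul_assoc, h]

lemma tri_clearA (hq0 : q ≠ 0) (hq : ∀ n : ℕ, n ≠ 0 → q ^ n ≠ 1) {m k j M : ℕ}
    (h : k + j ≤ m) (hM : m - k - j = M) :
    qbinom q m k * qbinom q (m-k) j * (qfact q k * qfact q j * qfact q M) = qfact q m := by
  subst hM
  rw [trinom hq0 hq h]
  have h1 := qfact_ne_zero hq0 hq k
  have h2 := qfact_ne_zero hq0 hq j
  have h3 := qfact_ne_zero hq0 hq (m-k-j)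
  field_simp

lemma tri_clearB (hq0 : q ≠ 0) (hq : ∀ n : ℕ, n ≠ 0 → q ^ n ≠ 1) {n k j M : ℕ}
    (h : k + j ≤ n + 1) (hk : k ≤ n) (hM : n + 1 - k - j = M) :
    qbinom q n k * qbinom q (n-k) j * (qfact q k * qfact q j * qfact q M)
      = qint q ((n+1-k-j : ℕ):ℤ) * qfact q n := by
  subst hM
  rw [trinom' hq0 hq h hk]
  have h1 := qfact_ne_zero hq0 hq k
  have h2 := qfact_ne_zero hq0 hq j
  have h3 := qfact_ne_zero hq0 hq (n+1-k-j)
  field_simp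

lemma tri_clearC (hq0 : q ≠ 0) (hq : ∀ n : ℕ, n ≠ 0 → q ^ n ≠ 1) {n k j' M : ℕ}
    (h : k + j' ≤ n) (hM : n - k - j' = M) :
    qbinom q n k * qbinom q (n-k) j' * (qfact q k * qfact q (j'+1) * qfact q M)
      = qint q ((j'+1 : ℕ):ℤ) * qfact q n := by
  rw [show qfact q (j'+1) = qint q ((j':ℤ)+1) * qfact q j' from rfl,
    show ((j'+1:ℕ):ℤ) = (j':ℤ)+1 by push_cast; ring]
  linear_combination qint q ((j':ℤ)+1) * tri_clearA hq0 hq h hM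

lemma tri_clearD (hq0 : q ≠ 0) (hq : ∀ n : ℕ, n ≠ 0 → q ^ n ≠ 1) {n k' j M : ℕ}
    (h : k' + j ≤ n) (hM : n - k' - j = M) :
    qbinom q n k' * qbinom q (n-k') j * (qfact q (k'+1) * qfact q j * qfact q M)
      = qint q ((k'+1 : ℕ):ℤ) * qfact q n := by
  rw [show qfact q (k'+1) = qint q ((k':ℤ)+1) * qfact q k' from rfl,
    show ((k'+1:ℕ):ℤ) = (k':ℤ)+1 by push_cast; ring]
  linear_combination qint q ((k':ℤ)+1) * tri_clearA hq0 hq h hM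

set_option maxHeartbeats 1000000 in
lemma star (hq0 : q ≠ 0) (hq : ∀ n : ℕ, n ≠ 0 → q ^ n ≠ 1) (n k j : ℕ) :
    qbinom q (n+1) k * qbinom q (n+1-k) j
      = q ^ ((j:ℤ)+(k:ℤ)) * (qbinom q n k * qbinom q (n-k) j)
        + (if j = 0 then 0 else q ^ ((j:ℤ)-((n:ℤ)+1)) * (qbinom q n k * qbinom q (n-k) (j-1)))
        + (if k = 0 then 0 else q ^ (2*(j:ℤ)+(k:ℤ)-((n:ℤ)+1)) * (qbinom q n (k-1) * qbinom q (n-(k-1)) j)) := by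
  have hF := qfact_ne_zero hq0 hq
  rcases le_or_gt (k+j) (n+1) with h | h
  · -- in range
    rcases k with _|k'
    · -- k = 0
      rcases j with _|j'
      · -- k = 0, j = 0
        simp [qbinom_zero hq0 hq]
      · -- k = 0, j = j'+1
        simp only [if_neg (Nat.succ_ne_zero j'), reduceIte, Nat.add_sub_cancel, add_zero]
        have hD : qfact q 0 * qfact q (j'+1) * qfact q (n+1-0-(j'+1)) ≠ 0 :=
          mul_ne_zero (mul_ne_zero (hF _) (hF _)) (hF _)
        apply mul_right_cancel₀ hD
        rw [tri_clearA hq0 hq (by omega : 0 + (j'+1) ≤ n+1) rfl]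
        rw [add_mul]
        rw [mul_mul_assoc (tri_clearB hq0 hq (by omega : 0 + (j'+1) ≤ n+1) (by omega : 0 ≤ n) rfl)]
        rw [mul_mul_assoc (tri_clearC hq0 hq (by omega : 0 + j' ≤ n) (by omega : n - 0 - j' = n+1-0-(j'+1)))]
        rw [show qfact q (n+1) = qint q ((n:ℤ)+1) * qfact q n from rfl]
        rw [qint_split hq0 hq (by omega : 0 + (j'+1) ≤ n + 1)]
        simp only [Nat.cast_zero, qint_zero, mul_zero, zero_mul, add_zero]
        ring
    · -- k = k'+1
      rcases j with _|j'
      · -- j = 0, k = k'+1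
        rcases le_or_gt (k'+1) n with hkn | hkn
        · simp only [reduceIte, if_neg (Nat.succ_ne_zero k'), Nat.add_sub_cancel, add_zero]
          have hD : qfact q (k'+1) * qfact q 0 * qfact q (n+1-(k'+1)-0) ≠ 0 :=
            mul_ne_zero (mul_ne_zero (hF _) (hF _)) (hF _)
          apply mul_right_cancel₀ hD
          rw [tri_clearA hq0 hq (by omega : (k'+1) + 0 ≤ n+1) rfl]
          rw [add_mul]
          rw [mul_mul_assoc (tri_clearB hq0 hq (by omega : (k'+1) + 0 ≤ n+1) hkn rfl)]
          rw [mul_mul_assoc (tri_clearD hq0 hq (by omega : k' + 0 ≤ n) (by omega : n - k' - 0 = n+1-(k'+1)-0))]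
          rw [show qfact q (n+1) = qint q ((n:ℤ)+1) * qfact q n from rfl]
          rw [qint_split hq0 hq (by omega : (k'+1) + 0 ≤ n + 1)]
          simp only [Nat.cast_zero, qint_zero, mul_zero, zero_mul, add_zero]
          ring
        · -- k = n+1, j = 0
          have hk1 : k' = n := by omega
          subst hk1
          simp only [reduceIte, if_neg (Nat.succ_ne_zero k'), Nat.add_sub_cancel, Nat.sub_self, add_zero]
          rw [qbinom_of_lt (by omega : k' < k'+1)]
          rw [show 2*((0:ℕ):ℤ)+((k'+1:ℕ):ℤ)-(((k':ℕ):ℤ)+1) = 0 by push_cast; ring]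
          simp [qbinom_self hq0 hq, qbinom_zero hq0 hq]
      · -- j = j'+1, k = k'+1  (generic)
        have hkn : k'+1 ≤ n := by omega
        simp only [if_neg (Nat.succ_ne_zero j'), if_neg (Nat.succ_ne_zero k'),
          Nat.add_sub_cancel]
        have hD : qfact q (k'+1) * qfact q (j'+1) * qfact q (n+1-(k'+1)-(j'+1)) ≠ 0 :=
          mul_ne_zero (mul_ne_zero (hF _) (hF _)) (hF _)
        apply mul_right_cancel₀ hD
        rw [tri_clearA hq0 hq (by omega : (k'+1) + (j'+1) ≤ n+1) rfl]
        rw [add_mul, add_mul]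
        rw [mul_mul_assoc (tri_clearB hq0 hq (by omega : (k'+1) + (j'+1) ≤ n+1) hkn rfl)]
        rw [mul_mul_assoc (tri_clearC hq0 hq (by omega : (k'+1) + j' ≤ n)
          (by omega : n - (k'+1) - j' = n+1-(k'+1)-(j'+1)))]
        rw [mul_mul_assoc (tri_clearD hq0 hq (by omega : k' + (j'+1) ≤ n)
          (by omega : n - k' - (j'+1) = n+1-(k'+1)-(j'+1)))]
        rw [show qfact q (n+1) = qint q ((n:ℤ)+1) * qfact q n from rfl]
        rw [qint_split hq0 hq (by omega : (k'+1) + (j'+1) ≤ n + 1)]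
        ring
  · -- out of range: everything vanishes
    have hL : qbinom q (n+1) k * qbinom q (n+1-k) j = 0 := by
      rcases le_or_gt k (n+1) with hk | hk
      · rw [qbinom_of_lt (by omega : n+1-k < j), mul_zero]
      · rw [qbinom_of_lt hk, zero_mul]
    have hT1 : qbinom q n k * qbinom q (n-k) j = 0 := by
      rcases le_or_gt k n with hk | hk
      · rw [qbinom_of_lt (by omega : n-k < j), mul_zero]
      · rw [qbinom_of_lt hk, zero_mul]
    rw [hL, hT1, mul_zero]
    have hT2 : (if j = 0 then (0:ℂ) else q ^ ((j:ℤ)-((n:ℤ)+1)) * (qbinom q n k * qbinom q (n-k) (j-1))) = 0 := by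
      rcases Nat.eq_zero_or_pos j with hj | hj
      · rw [if_pos hj]
      · rw [if_neg (by omega)]
        rcases le_or_gt k n with hk | hk
        · rw [qbinom_of_lt (by omega : n-k < j-1), mul_zero, mul_zero]
        · rw [qbinom_of_lt hk, zero_mul, mul_zero]
    have hT3 : (if k = 0 then (0:ℂ) else q ^ (2*(j:ℤ)+(k:ℤ)-((n:ℤ)+1)) * (qbinom q n (k-1) * qbinom q (n-(k-1)) j)) = 0 := by
      rcases Nat.eq_zero_or_pos k with hk | hk
      · rw [if_pos hk]
      · rw [if_neg (by omega)]
        rcases le_or_gt (k-1) n with hk1 | hk1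
        · rw [qbinom_of_lt (by omega : n-(k-1) < j), mul_zero, mul_zero]
        · rw [qbinom_of_lt hk1, zero_mul, mul_zero]
    rw [hT2, hT3]
    ring

end Part2

section AkjPart
variable {q : ℂ}


def w (k : ℕ) : ℤ := ((k:ℤ) * ((k:ℤ) - 7)) / 2

def E (n k j : ℕ) : ℤ := (j:ℤ)*((n:ℤ)-3) + ((k:ℤ)*((n:ℤ)+(j:ℤ)) + w k)

lemma w_succ (k : ℕ) : w (k+1) = w k + ((k:ℤ) - 3) := by
  unfold w
  rw [show ((k+1:ℕ):ℤ) * (((k+1:ℕ):ℤ) - 7) = (k:ℤ)*((k:ℤ)-7) + ((k:ℤ)-3)*2 by push_cast; ring,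
    Int.add_mul_ediv_right _ _ (by norm_num : (2:ℤ) ≠ 0)]

lemma div2 (n k j : ℕ) :
    ((k:ℤ) * (2*(n:ℤ) + 2*(j:ℤ) + (k:ℤ) - 7))/2 = (k:ℤ)*((n:ℤ)+(j:ℤ)) + w k := by
  rw [show (k:ℤ)*(2*(n:ℤ)+2*(j:ℤ)+(k:ℤ)-7) = (k:ℤ)*((k:ℤ)-7) + ((k:ℤ)*((n:ℤ)+(j:ℤ)))*2 by ring,
    Int.add_mul_ediv_right _ _ (by norm_num : (2:ℤ) ≠ 0)]
  unfold w; ring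

lemma akj_eq (hq0 : q ≠ 0) (α : ℂ) (n k j : ℕ) :
    akj q α n k j
      = (-1)^j * α^k * (q^2-1)^k * q^(E n k j) * (qbinom q n k * qbinom q (n-k) j) := by
  unfold akj E
  rw [div2]
  simp only [zpow_add₀ hq0]
  ring

lemma akj_zero_right (α : ℂ) {n k j : ℕ} (h : n - k < j) : akj q α n k j = 0 := by
  unfold akj
  rw [qbinom_of_lt h, mul_zero]

lemma akj_zero_left (α : ℂ) {n k j : ℕ} (h : n < k) : akj q α n k j = 0 := by
  unfold akj
  rw [qbinom_of_lt h, mul_zero, zero_mul]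

set_option maxHeartbeats 1000000 in
lemma akj_rec (hq0 : q ≠ 0) (hq : ∀ n : ℕ, n ≠ 0 → q ^ n ≠ 1) (α : ℂ) (n k j : ℕ) :
    akj q α (n+1) k j
      = q ^ (2*(j:ℤ)+2*(k:ℤ)) * akj q α n k j
        + (if j = 0 then 0 else -(q ^ (2*(j:ℤ)+2*(k:ℤ)-4) * akj q α n k (j-1)))
        + (if k = 0 then 0 else (α*(1-q^(-2:ℤ))) * (q ^ (4*(j:ℤ)+3*(k:ℤ)-3) * akj q α n (k-1) j)) := by
  rw [akj_eq hq0 α (n+1) k j, star hq0 hq n k j, mul_add, mul_add]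
  congr 1
  · congr 1
    · -- term 1
      rw [akj_eq hq0 α n k j]
      have h1 : q^(E (n+1) k j) * q^((j:ℤ)+(k:ℤ)) = q^(2*(j:ℤ)+2*(k:ℤ)) * q^(E n k j) := by
        rw [← zpow_add₀ hq0, ← zpow_add₀ hq0]
        congr 1
        simp only [E]; push_cast; ring
      linear_combination ((-1:ℂ)^j * α^k * (q^2-1)^k * (qbinom q n k * qbinom q (n-k) j)) * h1
    · -- term 2
      rcases j with _|j'
      · simp
      · simp only [if_neg (Nat.succ_ne_zero j'), Nat.add_sub_cancel]
        rw [akj_eq hq0 α n k j']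
        have h1 : q^(E (n+1) k (j'+1)) * q^(((j'+1:ℕ):ℤ)-((n:ℤ)+1))
            = q^(2*((j'+1:ℕ):ℤ)+2*(k:ℤ)-4) * q^(E n k j') := by
          rw [← zpow_add₀ hq0, ← zpow_add₀ hq0]
          congr 1
          simp only [E]; push_cast; ring
        linear_combination ((-1:ℂ)^(j'+1) * α^k * (q^2-1)^k
          * (qbinom q n k * qbinom q (n-k) j')) * h1
  · -- term 3
    rcases k with _|k'
    · simp
    · simp only [if_neg (Nat.succ_ne_zero k'), Nat.add_sub_cancel]
      rw [akj_eq hq0 α n k' j]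
      have h1 : q^(E (n+1) (k'+1) j) * q^(2*(j:ℤ)+((k'+1:ℕ):ℤ)-((n:ℤ)+1))
          = q^(-2:ℤ) * (q^(4*(j:ℤ)+3*((k'+1:ℕ):ℤ)-3) * q^(E n k' j)) := by
        rw [← zpow_add₀ hq0, ← zpow_add₀ hq0, ← zpow_add₀ hq0]
        congr 1
        simp only [E]
        rw [w_succ]
        push_cast; ring
      have h2 : q^(2:ℕ) * q^(-2:ℤ) = 1 := by
        rw [← zpow_natCast q 2, ← zpow_add₀ hq0]
        norm_num
      linear_combination ((-1:ℂ)^j * α^(k'+1) * (q^2-1)^(k'+1)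
            * (qbinom q n k' * qbinom q (n-k') j)) * h1
        + ((-1:ℂ)^j * α^(k'+1) * (q^2-1)^k' * (qbinom q n k' * qbinom q (n-k') j)
            * q^(4*(j:ℤ)+3*((k'+1:ℕ):ℤ)-3) * q^(E n k' j)) * h2

end AkjPart


end ScalarLayer
end UqSl3


namespace UqSl3
section SumLayer
variable {q : ℂ}

lemma sum_eq_rect (α : ℂ) (n N : ℕ) (hN : n + 1 ≤ N) :
    (∑ k ∈ Finset.range (n+1), ∑ j ∈ Finset.range (n-k+1),
        akj q α n k j • Mon q (n-k) k (2*(j:ℤ)) (-(2*(j:ℤ)+(k:ℤ))))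
      = ∑ k ∈ Finset.range N, ∑ j ∈ Finset.range N,
          akj q α n k j • Mon q (n-k) k (2*(j:ℤ)) (-(2*(j:ℤ)+(k:ℤ))) := by
  calc (∑ k ∈ Finset.range (n+1), ∑ j ∈ Finset.range (n-k+1),
        akj q α n k j • Mon q (n-k) k (2*(j:ℤ)) (-(2*(j:ℤ)+(k:ℤ))))
      = ∑ k ∈ Finset.range (n+1), ∑ j ∈ Finset.range N,
          akj q α n k j • Mon q (n-k) k (2*(j:ℤ)) (-(2*(j:ℤ)+(k:ℤ))) := by
        refine Finset.sum_congr rfl (fun k _ => ?_)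
        refine Finset.sum_subset (Finset.range_subset_range.mpr (by omega)) (fun j _ hj => ?_)
        rw [akj_zero_right α (by simpa using hj), zero_smul]
  _ = _ := by
        refine Finset.sum_subset (Finset.range_subset_range.mpr hN) (fun k _ hk => ?_)
        refine Finset.sum_eq_zero (fun j _ => ?_)
        rw [akj_zero_left α (by simpa using hk), zero_smul]

lemma step_sum (hq0 : q ≠ 0) (hq : ∀ n : ℕ, n ≠ 0 → q ^ n ≠ 1) (α : ℂ) (n : ℕ) :
    (∑ k ∈ Finset.range (n+2), ∑ j ∈ Finset.range (n+2),
        akj q α n k j • Mon q (n-k) k (2*(j:ℤ)) (-(2*(j:ℤ)+(k:ℤ)))) * gElt q α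
      = ∑ k ∈ Finset.range (n+2), ∑ j ∈ Finset.range (n+2),
          akj q α (n+1) k j • Mon q (n+1-k) k (2*(j:ℤ)) (-(2*(j:ℤ)+(k:ℤ))) := by
  simp only [Finset.sum_mul, smul_mul_assoc, Mon_mul_g' hq0 α n, smul_sub, smul_add,
    smul_smul, akj_rec hq0 hq α, add_smul, Finset.sum_add_distrib, Finset.sum_sub_distrib]
  -- match the three parts
  have hA : (∑ k ∈ Finset.range (n+2), ∑ j ∈ Finset.range (n+2),
        (akj q α n k j * q^(2*(j:ℤ)+2*(k:ℤ))) • Mon q (n-k+1) k (2*(j:ℤ)) (-(2*(j:ℤ)+(k:ℤ))))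
      = ∑ k ∈ Finset.range (n+2), ∑ j ∈ Finset.range (n+2),
          (q^(2*(j:ℤ)+2*(k:ℤ)) * akj q α n k j) • Mon q (n+1-k) k (2*(j:ℤ)) (-(2*(j:ℤ)+(k:ℤ))) := by
    refine Finset.sum_congr rfl (fun k _ => Finset.sum_congr rfl (fun j _ => ?_))
    rcases le_or_gt k n with hk | hk
    · rw [show n - k + 1 = n + 1 - k by omega, mul_comm]
    · rw [akj_zero_left α hk, zero_mul, mul_zero, zero_smul, zero_smul]
  have hB : (∑ k ∈ Finset.range (n+2), ∑ j ∈ Finset.range (n+2),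
        (akj q α n k j * q^(2*(j:ℤ)+2*(k:ℤ)-2)) •
          Mon q (n-k+1) k (2*((j+1:ℕ):ℤ)) (-(2*((j+1:ℕ):ℤ)+(k:ℤ))))
      = -∑ k ∈ Finset.range (n+2), ∑ j ∈ Finset.range (n+2),
          (if j = 0 then 0 else -(q ^ (2*(j:ℤ)+2*(k:ℤ)-4) * akj q α n k (j-1))) •
            Mon q (n+1-k) k (2*(j:ℤ)) (-(2*(j:ℤ)+(k:ℤ))) := by
    rw [← Finset.sum_neg_distrib]
    refine Finset.sum_congr rfl (fun k _ => ?_)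
    rw [← Finset.sum_neg_distrib]
    have e2 := Finset.sum_range_succ
      (fun j => -((if j = 0 then 0 else -(q ^ (2*(j:ℤ)+2*(k:ℤ)-4) * akj q α n k (j-1))) •
        Mon q (n+1-k) k (2*(j:ℤ)) (-(2*(j:ℤ)+(k:ℤ))))) (n+2)
    have e1 := Finset.sum_range_succ'
      (fun j => -((if j = 0 then 0 else -(q ^ (2*(j:ℤ)+2*(k:ℤ)-4) * akj q α n k (j-1))) •
        Mon q (n+1-k) k (2*(j:ℤ)) (-(2*(j:ℤ)+(k:ℤ))))) (n+2)
    have hzero : -((if (n+2) = 0 then (0:ℂ)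
        else -(q ^ (2*((n+2:ℕ):ℤ)+2*(k:ℤ)-4) * akj q α n k ((n+2)-1))) •
        Mon q (n+1-k) k (2*((n+2:ℕ):ℤ)) (-(2*((n+2:ℕ):ℤ)+(k:ℤ)))) = 0 := by
      rw [if_neg (by omega), akj_zero_right α (by omega), mul_zero, neg_zero, zero_smul, neg_zero]
    have hzero0 : -((if (0:ℕ) = 0 then (0:ℂ)
        else -(q ^ (2*((0:ℕ):ℤ)+2*(k:ℤ)-4) * akj q α n k (0-1))) •
        Mon q (n+1-k) k (2*((0:ℕ):ℤ)) (-(2*((0:ℕ):ℤ)+(k:ℤ)))) = 0 := by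
      rw [if_pos rfl, zero_smul, neg_zero]
    rw [hzero, add_zero] at e2
    rw [hzero0, add_zero] at e1
    rw [← e2, e1]
    refine Finset.sum_congr rfl (fun j _ => ?_)
    rw [if_neg (Nat.succ_ne_zero j), Nat.add_sub_cancel]
    rcases le_or_gt k n with hk | hk
    · rw [show n - k + 1 = n + 1 - k by omega,
        show 2*((j+1:ℕ):ℤ)+2*(k:ℤ)-4 = 2*(j:ℤ)+2*(k:ℤ)-2 by push_cast; ring]
      module
    · simp [akj_zero_left α hk]
  have hC : (∑ k ∈ Finset.range (n+2), ∑ j ∈ Finset.range (n+2),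
        (akj q α n k j * (α*(1-q^(-2:ℤ)) * q^(4*(j:ℤ)+3*(k:ℤ)))) •
          Mon q (n-k) (k+1) (2*(j:ℤ)) (-(2*(j:ℤ)+((k+1:ℕ):ℤ))))
      = ∑ k ∈ Finset.range (n+2), ∑ j ∈ Finset.range (n+2),
          (if k = 0 then 0 else (α*(1-q^(-2:ℤ))) * (q ^ (4*(j:ℤ)+3*(k:ℤ)-3) * akj q α n (k-1) j)) •
            Mon q (n+1-k) k (2*(j:ℤ)) (-(2*(j:ℤ)+(k:ℤ))) := by
    have e2 := Finset.sum_range_succ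
      (fun k => ∑ j ∈ Finset.range (n+2),
        (if k = 0 then 0 else (α*(1-q^(-2:ℤ))) * (q ^ (4*(j:ℤ)+3*(k:ℤ)-3) * akj q α n (k-1) j)) •
          Mon q (n+1-k) k (2*(j:ℤ)) (-(2*(j:ℤ)+(k:ℤ)))) (n+2)
    have e1 := Finset.sum_range_succ'
      (fun k => ∑ j ∈ Finset.range (n+2),
        (if k = 0 then 0 else (α*(1-q^(-2:ℤ))) * (q ^ (4*(j:ℤ)+3*(k:ℤ)-3) * akj q α n (k-1) j)) •
          Mon q (n+1-k) k (2*(j:ℤ)) (-(2*(j:ℤ)+(k:ℤ)))) (n+2)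
    have hzero : (∑ j ∈ Finset.range (n+2),
        (if (n+2) = 0 then (0:ℂ)
          else (α*(1-q^(-2:ℤ))) * (q ^ (4*(j:ℤ)+3*((n+2:ℕ):ℤ)-3) * akj q α n ((n+2)-1) j)) •
          Mon q (n+1-(n+2)) (n+2) (2*(j:ℤ)) (-(2*(j:ℤ)+((n+2:ℕ):ℤ)))) = 0 := by
      refine Finset.sum_eq_zero (fun j _ => ?_)
      rw [if_neg (by omega), akj_zero_left α (by omega), mul_zero, mul_zero, zero_smul]
    have hzero0 : (∑ j ∈ Finset.range (n+2),
        (if (0:ℕ) = 0 then (0:ℂ)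
          else (α*(1-q^(-2:ℤ))) * (q ^ (4*(j:ℤ)+3*((0:ℕ):ℤ)-3) * akj q α n (0-1) j)) •
          Mon q (n+1-0) 0 (2*(j:ℤ)) (-(2*(j:ℤ)+((0:ℕ):ℤ)))) = 0 := by
      refine Finset.sum_eq_zero (fun j _ => ?_)
      rw [if_pos rfl, zero_smul]
    rw [hzero, add_zero] at e2
    rw [hzero0, add_zero] at e1
    rw [← e2, e1]
    refine Finset.sum_congr rfl (fun k _ => Finset.sum_congr rfl (fun j _ => ?_))
    rw [if_neg (Nat.succ_ne_zero k), Nat.add_sub_cancel,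
      show n + 1 - (k+1) = n - k by omega,
      show 4*(j:ℤ)+3*((k+1:ℕ):ℤ)-3 = 4*(j:ℤ)+3*(k:ℤ) by push_cast; ring]
    congr 1
    ring
  rw [hA, hB, hC]
  abel

lemma akj_zero_zero (hq0 : q ≠ 0) (hq : ∀ n : ℕ, n ≠ 0 → q ^ n ≠ 1) (α : ℂ) :
    akj q α 0 0 0 = 1 := by
  show (-1:ℂ) ^ 0 * α ^ 0 * (q ^ 2 - 1) ^ 0 * q ^ (((0:ℕ) : ℤ) * (((0:ℕ) : ℤ) - 3)) *
    q ^ ((((0:ℕ) : ℤ) * (2 * ((0:ℕ) : ℤ) + 2 * ((0:ℕ) : ℤ) + ((0:ℕ) : ℤ) - 7)) / 2) *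
    qbinom q 0 0 * qbinom q (0 - 0) 0 = 1
  rw [qbinom_zero hq0 hq]
  norm_num

lemma main_sum (hq0 : q ≠ 0) (hq : ∀ n : ℕ, n ≠ 0 → q ^ n ≠ 1) (α : ℂ) (n : ℕ) :
    (∑ k ∈ Finset.range (n+1), ∑ j ∈ Finset.range (n-k+1),
        akj q α n k j • Mon q (n-k) k (2*(j:ℤ)) (-(2*(j:ℤ)+(k:ℤ))))
      = gElt q α ^ n := by
  induction n with
  | zero =>
      rw [pow_zero, Finset.sum_range_one, Finset.sum_range_one, akj_zero_zero hq0 hq α,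
        one_smul]
      norm_num
      exact Mon_one
  | succ n ih =>
      rw [pow_succ, ← ih, sum_eq_rect α n (n+2) (by omega), step_sum hq0 hq α n,
        ← sum_eq_rect α (n+1) (n+2) (by omega)]

end SumLayer
end UqSl3

open UqSl3 in
/-- `u(n, l, Q) = q^{2nl} K₂^l g^n Q v_η` for every positive `n`, `l ∈ ℤ` and
`Q ∈ ℂ[K^{±1}, C₁]`. -/
theorem statement17 (q α : ℂ) (hq0 : q ≠ 0) (hq : ∀ n : ℕ, n ≠ 0 → q ^ n ≠ 1) (hα : α ≠ 0)
    (n : ℕ) (hn0 : 0 < n) (l : ℤ) (Q : Uq q) (hQ : Q ∈ Acal q) :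
    uElt q α n l Q =
      q ^ (2 * (n : ℤ) * l) • ((K2z q l * gElt q α ^ n * Q) • vη q α) := by
  unfold uElt
  rw [show (∑ k ∈ Finset.range (n + 1), ∑ j ∈ Finset.range (n - k + 1),
      akj q α n k j •
        (F₂ q ^ (n - k) * F₃ q ^ k * K2z q (2 * (j : ℤ)) *
          Kz q (-(2 * (j : ℤ) + (k : ℤ))))) = gElt q α ^ n from main_sum hq0 hq α n]
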